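/- Let x₀ be the unique positive root of x^n − (F_n − b)x − (F_{n-1} − a) with n ≥ 2, 0 ≤ a ≤ F_{n-1}, 0 ≤ b ≤ F_n, not both maximal, and x₀ > 1. Then the unique positive root x₁ of x^{n} − (F_n − b)x − (F_{n-1} − a + 1) (one fewer small tile removed, assuming a ≥ 1) satisfies x₁ > x₀ and x₁^n − x₀^n ≤ 1 + (F_n − b)(x₁ − x₀); consequently x₁ − x₀ ≤ 1/(n·x₀^{n-1} − (F_n − b)). -/
import Mathlib

lemma key_convexity (x y : ℝ) (hx : 0 ≤ x) (hxy : x ≤ y) :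
    ∀ k : ℕ, ((k : ℝ) + 1) * x ^ k * (y - x) ≤ y ^ (k + 1) - x ^ (k + 1) := by
  intro k
  induction k with
  | zero => simp
  | succ k ih =>
    have hxk : x ^ (k + 1) ≤ y ^ (k + 1) := pow_le_pow_left₀ hx hxy (k + 1)
    have h2 := mul_le_mul_of_nonneg_left ih hx
    have hextra := mul_le_mul_of_nonneg_right hxk (sub_nonneg.2 hxy)
    push_cast
    have h3 : ((k : ℝ) + 1 + 1) * x ^ (k + 1) * (y - x)
        = x * (((k : ℝ) + 1) * x ^ k * (y - x)) + x ^ (k + 1) * (y - x) := by ring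
    have h4 : y ^ (k + 1 + 1) - x ^ (k + 1 + 1)
        = x * (y ^ (k + 1) - x ^ (k + 1)) + y ^ (k + 1) * (y - x) := by ring
    rw [h3, h4]
    exact add_le_add h2 hextra

theorem root_perturbation_bound (n a b : ℕ) (hn : 2 ≤ n) (ha1 : 1 ≤ a)
    (ha : a ≤ Nat.fib (n - 1)) (hb : b ≤ Nat.fib n)
    (hab : ¬(a = Nat.fib (n - 1) ∧ b = Nat.fib n))
    (x₀ x₁ : ℝ) (hx₀ : 0 < x₀) (hx₀1 : 1 < x₀)
    (hroot₀ : x₀ ^ n - ((Nat.fib n : ℝ) - b) * x₀ - ((Nat.fib (n - 1) : ℝ) - a) = 0)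
    (hx₁ : 0 < x₁)
    (hroot₁ :
      x₁ ^ n - ((Nat.fib n : ℝ) - b) * x₁ - ((Nat.fib (n - 1) : ℝ) - a + 1) = 0) :
    x₀ < x₁ ∧
    x₁ ^ n - x₀ ^ n ≤ 1 + ((Nat.fib n : ℝ) - b) * (x₁ - x₀) ∧
    (0 < (n : ℝ) * x₀ ^ (n - 1) - ((Nat.fib n : ℝ) - b) →
      x₁ - x₀ ≤ 1 / ((n : ℝ) * x₀ ^ (n - 1) - ((Nat.fib n : ℝ) - b))) := by
  obtain ⟨m, rfl⟩ : ∃ m, n = m + 1 := ⟨n - 1, by omega⟩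
  simp only [Nat.add_sub_cancel] at *
  set c : ℝ := (Nat.fib (m + 1) : ℝ) - b with hc_def
  set d : ℝ := (Nat.fib m : ℝ) - a with hd_def
  have hc : 0 ≤ c := by
    rw [hc_def, sub_nonneg]; exact_mod_cast hb
  have hd : 0 ≤ d := by
    rw [hd_def, sub_nonneg]; exact_mod_cast ha
  have e0 : x₀ ^ (m + 1) = c * x₀ + d := by linarith
  have e1 : x₁ ^ (m + 1) = c * x₁ + d + 1 := by linarith
  have h01 : x₀ < x₁ := by
    by_contra h
    push_neg at h
    have hpow : x₁ ^ m ≤ x₀ ^ m := pow_le_pow_left₀ hx₁.le h m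
    have p0 : x₀ ^ (m + 1) = x₀ * x₀ ^ m := by ring
    have p1 : x₁ ^ (m + 1) = x₁ * x₁ ^ m := by ring
    nlinarith [mul_nonneg hd (sub_nonneg.2 h), mul_pos hx₀ hx₁,
      mul_le_mul_of_nonneg_left hpow (mul_pos hx₀ hx₁).le]
  refine ⟨h01, by linarith, ?_⟩
  intro hp
  have hkey := key_convexity x₀ x₁ hx₀.le h01.le m
  rw [le_div_iff₀ hp]
  push_cast at hp ⊢
  nlinarith
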